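/- Let E and F be the coefficients of the Biedenharn–Elliott recurrence with i_2 = i_3 = j_2, i_4 = j_4, i_5 = j_5, i_6 = j_6, where j_1 = j_5 + j_6 ≥ 3, |j_5 - j_6| < j_1, and j_1 < 2j_2 + 1. Then E(j_1) ≠ 0, and if F(j_1) = 0 then F(j_1 - 2) ≠ 0. -/
import Mathlib


/-- The coefficient `E` of the Biedenharn–Elliott recurrence with `i₂ = i₃ = j₂`,
`i₅ = j₅`, `i₆ = j₆`. -/
noncomputable def Ecoef (j₂ j₅ j₆ i₁ : ℝ) : ℝ :=
  Real.sqrt (i₁ ^ 2 * ((2 * j₂ + 1) ^ 2 - i₁ ^ 2) * (i₁ ^ 2 - (j₅ - j₆) ^ 2) *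
    ((j₅ + j₆ + 1) ^ 2 - i₁ ^ 2))

/-- The coefficient `F` of the Biedenharn–Elliott recurrence with `i₂ = i₃ = j₂`,
`i₄ = j₄`, `i₅ = j₅`, `i₆ = j₆`. -/
def Fcoef (j₂ j₄ j₅ j₆ i₁ : ℝ) : ℝ :=
  -((2 * i₁ + 1) * i₁ * (i₁ + 1) *
    (i₁ * (i₁ + 1) - 2 * j₂ * (j₂ + 1) - j₅ * (j₅ + 1) - j₆ * (j₆ + 1)
      + 2 * j₄ * (j₄ + 1)))

/-- If `j₁ = j₅ + j₆ ≥ 3`, `|j₅ - j₆| < j₁` and `j₁ < 2j₂ + 1` (all `jᵢ` nonnegative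
half-integers), then `E(j₁) ≠ 0`, and if `F(j₁) = 0` then `F(j₁ - 2) ≠ 0`. -/
theorem stmt_6 (j₁ j₂ j₄ j₅ j₆ : ℝ)
    (half₁ : ∃ k : ℤ, j₁ = k / 2) (half₂ : ∃ k : ℤ, j₂ = k / 2)
    (half₄ : ∃ k : ℤ, j₄ = k / 2) (half₅ : ∃ k : ℤ, j₅ = k / 2)
    (half₆ : ∃ k : ℤ, j₆ = k / 2)
    (n₁ : 0 ≤ j₁) (n₂ : 0 ≤ j₂) (n₄ : 0 ≤ j₄) (n₅ : 0 ≤ j₅) (n₆ : 0 ≤ j₆)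
    (hsum : j₁ = j₅ + j₆) (h3 : 3 ≤ j₁)
    (hlt : |j₅ - j₆| < j₁) (hlt' : j₁ < 2 * j₂ + 1) :
    Ecoef j₂ j₅ j₆ j₁ ≠ 0 ∧
      (Fcoef j₂ j₄ j₅ j₆ j₁ = 0 → Fcoef j₂ j₄ j₅ j₆ (j₁ - 2) ≠ 0) := by

  have habs := abs_lt.mp hlt
  constructor
  · unfold Ecoef
    have h1 : 0 < j₁ ^ 2 := by nlinarith
    have h2 : 0 < (2 * j₂ + 1) ^ 2 - j₁ ^ 2 := by nlinarith
    have h3' : 0 < j₁ ^ 2 - (j₅ - j₆) ^ 2 := by nlinarith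
    have h4 : 0 < (j₅ + j₆ + 1) ^ 2 - j₁ ^ 2 := by nlinarith
    have := Real.sqrt_pos.mpr (by positivity :
      (0:ℝ) < j₁ ^ 2 * ((2 * j₂ + 1) ^ 2 - j₁ ^ 2) * (j₁ ^ 2 - (j₅ - j₆) ^ 2) *
        ((j₅ + j₆ + 1) ^ 2 - j₁ ^ 2))
    exact this.ne'
  · intro hF hF2
    unfold Fcoef at hF hF2
    have hA : 0 < (2 * j₁ + 1) * j₁ * (j₁ + 1) :=
      mul_pos (mul_pos (by linarith) (by linarith)) (by linarith)
    have hG : j₁ * (j₁ + 1) - 2 * j₂ * (j₂ + 1) - j₅ * (j₅ + 1) - j₆ * (j₆ + 1)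
        + 2 * j₄ * (j₄ + 1) = 0 := by
      rcases mul_eq_zero.mp (neg_eq_zero.mp hF) with h | h
      · exact absurd h hA.ne'
      · exact h
    have hA2 : 0 < (2 * (j₁ - 2) + 1) * (j₁ - 2) * (j₁ - 2 + 1) :=
      mul_pos (mul_pos (by linarith) (by linarith)) (by linarith)
    have hG2 : (j₁ - 2) * (j₁ - 2 + 1) - 2 * j₂ * (j₂ + 1) - j₅ * (j₅ + 1)
        - j₆ * (j₆ + 1) + 2 * j₄ * (j₄ + 1) = 0 := by
      rcases mul_eq_zero.mp (neg_eq_zero.mp hF2) with h | h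
      · exact absurd h hA2.ne'
      · exact h
    nlinarith [hG, hG2]
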